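/- Suppose the MDP is transient. Define the sequence w^{t,*} ∈ ℝ^S by w^{0,*} = −1 (the vector with all entries −1) and w^{t+1,*} = L* w^{t,*}. If there exists M ∈ ℝ such that (w^{t,*})_s ≥ M for all t ∈ ℕ and s ∈ S, then the limit w^{∞,*} := lim_{t→∞} w^{t,*} exists in ℝ^S, there exists a deterministic decision rule d* : S → A such that w^{∞,*} = B^{d*} w^{∞,*} − b^{d*}, and w^{∞,*} is the unique vector w ∈ ℝ^S satisfying w = B^{d*} w − b^{d*}. -/

import Mathlib

open Matrix Filter

/-- Spectral radius of a real square matrix: the maximum modulus of its complex eigenvalues. -/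
noncomputable def specRad {S : Type*} [Fintype S] [DecidableEq S] (M : Matrix S S ℝ) : ℝ :=
  sSup ((fun z : ℂ => ‖z‖) '' spectrum ℂ (M.map Complex.ofReal))

/-- Exponential transition matrix `B^a` for action `a`. -/
noncomputable def Bmat {S A : Type*} (p r : S → A → Option S → ℝ) (β : ℝ) (a : A) :
    Matrix S S ℝ :=
  Matrix.of fun s s' => p s a (some s') * Real.exp (-β * r s a (some s'))

/-- Exponential termination vector `b^a` for action `a` (`none` is the sink state `e`). -/
noncomputable def bvec {S A : Type*} (p r : S → A → Option S → ℝ) (β : ℝ) (a : A) : S → ℝ :=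
  fun s => p s a none * Real.exp (-β * r s a none)

/-- Optimal exponential Bellman operator `L*`. -/
noncomputable def Lstar {S A : Type*} [Fintype S] [Fintype A] [Nonempty A]
    (p r : S → A → Option S → ℝ) (β : ℝ) (w : S → ℝ) : S → ℝ :=
  fun s => Finset.univ.sup' Finset.univ_nonempty
    (fun a : A => (Bmat p r β a *ᵥ w) s - bvec p r β a s)

/-- Transition matrix `P^d` (restricted to non-sink states) of a deterministic decision rule. -/
def Pmat {S A : Type*} (p : S → A → Option S → ℝ) (d : S → A) : Matrix S S ℝ :=
  Matrix.of fun s s' => p s (d s) (some s')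

/-- Exponential transition matrix `B^d` of a deterministic decision rule. -/
noncomputable def Bdet {S A : Type*} (p r : S → A → Option S → ℝ) (β : ℝ) (d : S → A) :
    Matrix S S ℝ :=
  Matrix.of fun s s' => Bmat p r β (d s) s s'

/-- Exponential termination vector `b^d` of a deterministic decision rule. -/
noncomputable def bdet {S A : Type*} (p r : S → A → Option S → ℝ) (β : ℝ) (d : S → A) :
    S → ℝ :=
  fun s => bvec p r β (d s) s

set_option linter.unusedSectionVars false
set_option linter.unusedVariables false
set_option maxHeartbeats 1000000

section AuxLemmas
variable {S : Type*} [Fintype S] [DecidableEq S]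

lemma aux_mulVec_mono {B : Matrix S S ℝ} (hB : ∀ s s', 0 ≤ B s s') {v w : S → ℝ}
    (h : v ≤ w) : B *ᵥ v ≤ B *ᵥ w := fun s =>
  Finset.sum_le_sum fun s' _ => mul_le_mul_of_nonneg_left (h s') (hB s s')

lemma aux_pow_mulVec_mono {B : Matrix S S ℝ} (hB : ∀ s s', 0 ≤ B s s') (n : ℕ) {v w : S → ℝ}
    (h : v ≤ w) : B ^ n *ᵥ v ≤ B ^ n *ᵥ w := by
  induction n generalizing v w with
  | zero => simpa [Matrix.one_mulVec] using h
  | succ n ih =>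
      rw [pow_succ]
      have h1 : B *ᵥ v ≤ B *ᵥ w := aux_mulVec_mono hB h
      calc (B ^ n * B) *ᵥ v = B ^ n *ᵥ (B *ᵥ v) := (Matrix.mulVec_mulVec ..).symm
        _ ≤ B ^ n *ᵥ (B *ᵥ w) := ih h1
        _ = (B ^ n * B) *ᵥ w := Matrix.mulVec_mulVec ..

lemma aux_pow_mulVec_nonneg {B : Matrix S S ℝ} (hB : ∀ s s', 0 ≤ B s s') (n : ℕ) {v : S → ℝ}
    (h : 0 ≤ v) : 0 ≤ B ^ n *ᵥ v := by
  have := aux_pow_mulVec_mono hB n h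
  rwa [Matrix.mulVec_zero] at this

attribute [local instance] Matrix.linftyOpNormedRing Matrix.linftyOpNormedAlgebra

/-- If a nonnegative substochastic matrix admits a nonnegative, somewhere-positive
superinvariant vector, then its spectral radius is at least `1`. -/
lemma aux_no_superinvariant (P : Matrix S S ℝ)
    (hP : ∀ s s', 0 ≤ P s s') (hsub : ∀ s, ∑ s', P s s' ≤ 1)
    (hspec : specRad P < 1) (χ : S → ℝ) (hχ : 0 ≤ χ) (s₀ : S) (hs₀ : 0 < χ s₀)
    (hinv : χ ≤ P *ᵥ χ) : False := by
  have : Nonempty S := ⟨s₀⟩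
  by_cases hdet : IsUnit ((1 : Matrix S S ℝ) - P).det
  · -- solve (1-P) x = χ and iterate to get a contradiction
    set x : S → ℝ := ((1 : Matrix S S ℝ) - P)⁻¹ *ᵥ χ with hxdef
    have hx : ((1 : Matrix S S ℝ) - P) *ᵥ x = χ := by
      rw [hxdef, Matrix.mulVec_mulVec, Matrix.mul_nonsing_inv _ hdet, Matrix.one_mulVec]
    have hfix : x = P *ᵥ x + χ := by
      rw [Matrix.sub_mulVec, Matrix.one_mulVec] at hx
      exact sub_eq_iff_eq_add'.mp hx
    have key : ∀ n : ℕ, P ^ n *ᵥ x + (n : ℝ) • χ ≤ x := by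
      intro n
      induction n with
      | zero => simp [Matrix.one_mulVec]
      | succ n ih =>
          have h1 : P *ᵥ (P ^ n *ᵥ x + (n : ℝ) • χ) ≤ P *ᵥ x := aux_mulVec_mono hP ih
          rw [Matrix.mulVec_add, Matrix.mulVec_smul, Matrix.mulVec_mulVec, ← pow_succ'] at h1
          have h2 : (n : ℝ) • χ ≤ (n : ℝ) • (P *ᵥ χ) :=
            smul_le_smul_of_nonneg_left hinv (Nat.cast_nonneg n)
          intro s
          have := h1 s
          have h2s := h2 s
          have hvs := hinv s
          have hfs := congrFun hfix s
          simp only [Pi.add_apply, Pi.smul_apply, smul_eq_mul, Nat.cast_succ] at *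
          nlinarith
    set C : ℝ := Finset.univ.sup' Finset.univ_nonempty (fun s => |x s|) with hCdef
    have hC : ∀ s, |x s| ≤ C := fun s => Finset.le_sup' (fun t => |x t|) (Finset.mem_univ s)
    have hC0 : 0 ≤ C := le_trans (abs_nonneg _) (hC s₀)
    have hPc : P *ᵥ (fun _ => C) ≤ (fun _ => C) := by
      intro s
      have : (P *ᵥ (fun _ => C)) s = (∑ s', P s s') * C := by
        simp [Matrix.mulVec, dotProduct, Finset.sum_mul]
      rw [this]
      calc (∑ s', P s s') * C ≤ 1 * C := mul_le_mul_of_nonneg_right (hsub s) hC0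
        _ = C := one_mul C
    have hPnc : ∀ n, P ^ n *ᵥ (fun _ => C) ≤ (fun _ => C) := by
      intro n
      induction n with
      | zero => simp [Matrix.one_mulVec]
      | succ n ih =>
          calc P ^ (n+1) *ᵥ (fun _ => C) = P ^ n *ᵥ (P *ᵥ (fun _ => C)) := by
                rw [Matrix.mulVec_mulVec, ← pow_succ]
            _ ≤ P ^ n *ᵥ (fun _ => C) := aux_pow_mulVec_mono hP n hPc
            _ ≤ (fun _ => C) := ih
    have hlow : ∀ n : ℕ, -C ≤ (P ^ n *ᵥ x) s₀ := by
      intro n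
      have h1 : (fun _ => -C : S → ℝ) ≤ x := fun s => (abs_le.mp (hC s)).1
      have h2 := aux_pow_mulVec_mono hP n h1
      have h3 : P ^ n *ᵥ (fun _ => -C : S → ℝ) = -(P ^ n *ᵥ (fun _ => C)) := by
        have : (fun _ => -C : S → ℝ) = -(fun _ => C : S → ℝ) := rfl
        rw [this, Matrix.mulVec_neg]
      have h4 := h2 s₀
      rw [h3] at h4
      have h5 := hPnc n s₀
      simp only [Pi.neg_apply] at h4
      linarith
    obtain ⟨n, hn⟩ := exists_nat_gt ((x s₀ + C) / χ s₀)
    have := key n s₀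
    have hl := hlow n
    simp only [Pi.add_apply, Pi.smul_apply, smul_eq_mul] at this
    rw [div_lt_iff₀ hs₀] at hn
    nlinarith
  · have hdet0 : ((1 : Matrix S S ℝ) - P).det = 0 := by
      by_contra h
      exact hdet (isUnit_iff_ne_zero.mpr h)
    set M' : Matrix S S ℂ := P.map Complex.ofReal with hM'
    have hmap : ((1 : Matrix S S ℝ) - P).map (Complex.ofRealHom : ℝ →+* ℂ) = 1 - M' := by
      rw [Matrix.map_sub _ (by simp : ∀ a b : ℝ, (Complex.ofRealHom (a - b) : ℂ) = _ - _)]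
      congr 1
      ext i j
      simp [Matrix.one_apply, apply_ite]
    have hdetC : ((1 : Matrix S S ℂ) - M').det = 0 := by
      rw [← hmap]
      rw [← RingHom.mapMatrix_apply, ← RingHom.map_det, hdet0, map_zero]
    have hnunit : ¬IsUnit ((1 : Matrix S S ℂ) - M') := by
      rw [Matrix.isUnit_iff_isUnit_det, hdetC]
      exact fun h => by simpa using h.ne_zero
    have hmem : (1 : ℂ) ∈ spectrum ℂ M' := by
      rw [spectrum.mem_iff]
      simpa using hnunit
    have hbdd : BddAbove ((fun z : ℂ => ‖z‖) '' spectrum ℂ M') := by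
      obtain ⟨C', hC'⟩ := (spectrum.isBounded (𝕜 := ℂ) M').subset_closedBall 0
      refine ⟨C', ?_⟩
      rintro _ ⟨z, hz, rfl⟩
      have hzb := hC' hz
      rw [Metric.mem_closedBall, dist_zero_right] at hzb
      simpa using hzb
    have h1le : (1 : ℝ) ≤ specRad P := by
      have : (1 : ℝ) ∈ (fun z : ℂ => ‖z‖) '' spectrum ℂ M' := ⟨1, hmem, by simp⟩
      exact le_csSup hbdd this
    linarith

/-- Powers of a nonnegative matrix with a positive vector `u` such that `B u ≤ u`,
with iterates eventually strictly below `u` at every coordinate, kill every vector. -/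
lemma aux_pow_mulVec_tendsto_zero [Nonempty S] {B : Matrix S S ℝ} (hB : ∀ s s', 0 ≤ B s s')
    {u : S → ℝ} (hu : ∀ s, 0 < u s) (hBu : B *ᵥ u ≤ u)
    (hreach : ∀ s, ∃ k, (B ^ (k+1) *ᵥ u) s < u s) (v : S → ℝ) (s : S) :
    Tendsto (fun n => (B ^ n *ᵥ v) s) atTop (nhds 0) := by
  have hdec : ∀ n, B ^ (n+1) *ᵥ u ≤ B ^ n *ᵥ u := by
    intro n
    calc B ^ (n+1) *ᵥ u = B ^ n *ᵥ (B *ᵥ u) := by rw [Matrix.mulVec_mulVec, ← pow_succ]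
      _ ≤ B ^ n *ᵥ u := aux_pow_mulVec_mono hB n hBu
  have hdec' : ∀ m n, m ≤ n → B ^ n *ᵥ u ≤ B ^ m *ᵥ u := by
    intro m n hmn
    induction n with
    | zero => rw [Nat.le_zero.mp hmn]
    | succ n ih =>
        rcases Nat.lt_or_ge m (n+1) with h | h
        · exact le_trans (hdec n) (ih (Nat.lt_succ_iff.mp h))
        · rw [le_antisymm hmn h]
  have hupos : ∀ n, 0 ≤ B ^ n *ᵥ u := by
    intro n
    have h0 : (0 : S → ℝ) ≤ u := fun t => (hu t).le
    have := aux_pow_mulVec_mono hB n h0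
    rwa [Matrix.mulVec_zero] at this
  choose ks hks using hreach
  set m : ℕ := Finset.univ.sup ks + 1 with hm
  have hmpos : 0 < m := Nat.succ_pos _
  have hmlt : ∀ s', (B ^ m *ᵥ u) s' < u s' := by
    intro s'
    have h1 : ks s' + 1 ≤ m := Nat.succ_le_succ (Finset.le_sup (Finset.mem_univ s'))
    exact lt_of_le_of_lt (hdec' _ _ h1 s') (hks s')
  set θ : ℝ := Finset.univ.sup' Finset.univ_nonempty (fun s' => (B ^ m *ᵥ u) s' / u s') with hθ
  have hθ1 : θ < 1 := by
    rw [hθ, Finset.sup'_lt_iff]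
    intro s' _
    exact (div_lt_one (hu s')).mpr (hmlt s')
  have hθ0 : 0 ≤ θ := by
    have := Finset.le_sup' (fun s' => (B ^ m *ᵥ u) s' / u s') (Finset.mem_univ s)
    exact le_trans (div_nonneg (hupos m s) (hu s).le) this
  have hstep : B ^ m *ᵥ u ≤ θ • u := by
    intro s'
    have h1 : (B ^ m *ᵥ u) s' / u s' ≤ θ :=
      Finset.le_sup' (fun t => (B ^ m *ᵥ u) t / u t) (Finset.mem_univ s')
    have := mul_le_mul_of_nonneg_right h1 (hu s').le
    rwa [div_mul_cancel₀ _ (hu s').ne'] at this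
  have hiter : ∀ k, B ^ (m * k) *ᵥ u ≤ θ ^ k • u := by
    intro k
    induction k with
    | zero => simp [Matrix.one_mulVec]
    | succ k ih =>
        have h2 : B ^ (m * (k+1)) *ᵥ u = B ^ (m * k) *ᵥ (B ^ m *ᵥ u) := by
          rw [Matrix.mulVec_mulVec, ← pow_add, Nat.mul_succ]
        rw [h2]
        calc B ^ (m*k) *ᵥ (B ^ m *ᵥ u) ≤ B ^ (m*k) *ᵥ (θ • u) := aux_pow_mulVec_mono hB _ hstep
          _ = θ • (B ^ (m*k) *ᵥ u) := Matrix.mulVec_smul ..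
          _ ≤ θ • (θ ^ k • u) := smul_le_smul_of_nonneg_left ih hθ0
          _ = θ ^ (k+1) • u := by rw [smul_smul, ← pow_succ']
  have hbound : ∀ n, B ^ n *ᵥ u ≤ θ ^ (n / m) • u := by
    intro n
    have h1 : m * (n / m) ≤ n := Nat.mul_div_le n m
    exact le_trans (hdec' _ _ h1) (hiter (n / m))
  set c : ℝ := Finset.univ.sup' Finset.univ_nonempty (fun t => |v t| / u t) with hc
  have hc0 : 0 ≤ c :=
    le_trans (div_nonneg (abs_nonneg _) (hu s).le)
      (Finset.le_sup' (fun t => |v t| / u t) (Finset.mem_univ s))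
  have hvc : ∀ t, |v t| ≤ c * u t := by
    intro t
    have h1 : |v t| / u t ≤ c := Finset.le_sup' (fun t => |v t| / u t) (Finset.mem_univ t)
    have := mul_le_mul_of_nonneg_right h1 (hu t).le
    rwa [div_mul_cancel₀ _ (hu t).ne'] at this
  have hnorm : ∀ n, |(B ^ n *ᵥ v) s| ≤ c * θ ^ (n / m) * u s := by
    intro n
    have hle : v ≤ c • u := fun t => (abs_le.mp (hvc t)).2
    have hge : -(c • u) ≤ v := fun t => by
      have := (abs_le.mp (hvc t)).1; simpa using this
    have h1 : B ^ n *ᵥ v ≤ c • (B ^ n *ᵥ u) := by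
      have := aux_pow_mulVec_mono hB n hle
      rwa [Matrix.mulVec_smul] at this
    have h2 : -(c • (B ^ n *ᵥ u)) ≤ B ^ n *ᵥ v := by
      have := aux_pow_mulVec_mono hB n hge
      rwa [Matrix.mulVec_neg, Matrix.mulVec_smul] at this
    have h3 : (B ^ n *ᵥ u) s ≤ θ ^ (n / m) * u s := hbound n s
    have h4 : c * (B ^ n *ᵥ u) s ≤ c * (θ ^ (n / m) * u s) :=
      mul_le_mul_of_nonneg_left h3 hc0
    have h5 := h1 s
    have h6 := h2 s
    simp only [Pi.smul_apply, smul_eq_mul, Pi.neg_apply] at h5 h6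
    rw [abs_le]
    constructor <;> nlinarith
  have hdiv : Tendsto (fun n : ℕ => n / m) atTop atTop := by
    apply tendsto_atTop_atTop.mpr
    intro b
    exact ⟨b * m, fun a ha => (Nat.le_div_iff_mul_le hmpos).mpr ha⟩
  have hθt : Tendsto (fun n : ℕ => c * θ ^ (n / m) * u s) atTop (nhds 0) := by
    have h1 : Tendsto (fun k : ℕ => θ ^ k) atTop (nhds 0) :=
      tendsto_pow_atTop_nhds_zero_of_lt_one hθ0 hθ1
    have h2 := (h1.comp hdiv).const_mul c
    have h3 := h2.mul_const (u s)
    simpa using h3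
  exact squeeze_zero_norm (fun n => by simpa [Real.norm_eq_abs] using hnorm n) hθt

/-- A finite `sup'` of convergent real sequences converges to the `sup'` of the limits. -/
lemma aux_tendsto_finset_sup' {ι : Type*} {F : Finset ι} (hF : F.Nonempty) (f : ι → ℕ → ℝ)
    (g : ι → ℝ) :
    (∀ i ∈ F, Tendsto (fun t => f i t) atTop (nhds (g i))) →
    Tendsto (fun t => F.sup' hF (fun i => f i t)) atTop (nhds (F.sup' hF g)) := by
  induction hF using Finset.Nonempty.cons_induction with
  | singleton i => intro h; simpa using h i (by simp)
  | cons i F hi hF ih =>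
      intro h
      have h1 := ih (fun j hj => h j (Finset.mem_cons_of_mem hj))
      have h2 := h i (Finset.mem_cons_self i F)
      simp only [Finset.sup'_cons hF]
      exact h2.max h1

end AuxLemmas

theorem stmt0
    {S A : Type*} [Fintype S] [DecidableEq S] [Nonempty S] [Fintype A] [Nonempty A]
    (p r : S → A → Option S → ℝ) (β : ℝ) (hβ : 0 < β)
    (hp_nonneg : ∀ s a s', 0 ≤ p s a s')
    (hp_sum : ∀ s a, ∑ s' : Option S, p s a s' = 1)
    (htransient : ∀ d : S → A, specRad (Pmat p d) < 1)
    (w : ℕ → S → ℝ)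
    (hw0 : w 0 = fun _ => -1)
    (hwsucc : ∀ t, w (t + 1) = Lstar p r β (w t))
    (M : ℝ) (hM : ∀ t s, M ≤ w t s) :
    ∃ winf : S → ℝ,
      Filter.Tendsto w Filter.atTop (nhds winf) ∧
      ∃ dstar : S → A,
        winf = Bdet p r β dstar *ᵥ winf - bdet p r β dstar ∧
        ∀ w' : S → ℝ, w' = Bdet p r β dstar *ᵥ w' - bdet p r β dstar → w' = winf := by
  classical
  set L : (S → ℝ) → (S → ℝ) := Lstar p r β with hL
  have hBnn : ∀ (a : A) (s s' : S), 0 ≤ Bmat p r β a s s' := fun a s s' =>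
    mul_nonneg (hp_nonneg _ _ _) (Real.exp_pos _).le
  have hbnn : ∀ (a : A) (s : S), 0 ≤ bvec p r β a s := fun a s =>
    mul_nonneg (hp_nonneg _ _ _) (Real.exp_pos _).le
  -- monotonicity of L
  have hLmono : ∀ {v v' : S → ℝ}, v ≤ v' → L v ≤ L v' := by
    intro v v' h s
    apply Finset.sup'_le
    intro a _
    have h1 : (Bmat p r β a *ᵥ v) s ≤ (Bmat p r β a *ᵥ v') s := aux_mulVec_mono (hBnn a) h s
    exact le_trans (by linarith)
      (Finset.le_sup' (fun a => (Bmat p r β a *ᵥ v') s - bvec p r β a s) (Finset.mem_univ a))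
  have hLle : ∀ (d : S → A) (v : S → ℝ) (s : S),
      (Bdet p r β d *ᵥ v) s - bdet p r β d s ≤ L v s := by
    intro d v s
    have h0 : (Bdet p r β d *ᵥ v) s = (Bmat p r β (d s) *ᵥ v) s := rfl
    rw [h0]
    exact Finset.le_sup' (fun a => (Bmat p r β a *ᵥ v) s - bvec p r β a s) (Finset.mem_univ (d s))
  -- the decreasing upper iterates y
  set y : ℕ → S → ℝ := fun t => L^[t] 0 with hy
  have hy0 : y 0 = 0 := rfl
  have hysucc : ∀ t, y (t + 1) = L (y t) := fun t => Function.iterate_succ_apply' L t 0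
  have hL0 : L 0 ≤ 0 := by
    intro s
    apply Finset.sup'_le
    intro a _
    rw [Matrix.mulVec_zero]
    have := hbnn a s
    simp only [Pi.zero_apply]
    linarith
  have hyanti : ∀ t, y (t + 1) ≤ y t := by
    intro t
    induction t with
    | zero => rw [hysucc 0, hy0]; exact hL0
    | succ t ih =>
        have h := hLmono ih
        rw [← hysucc (t+1), ← hysucc t] at h
        exact h
  have hyAnti : Antitone y := antitone_nat_of_succ_le hyanti
  have hwy : ∀ t, w t ≤ y t := by
    intro t
    induction t with
    | zero =>
        rw [hw0, hy0]
        intro s; norm_num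
    | succ t ih => rw [hwsucc t, hysucc t]; exact hLmono ih
  have hyM : ∀ t s, M ≤ y t s := fun t s => le_trans (hM t s) (hwy t s)
  -- the limit
  set winf : S → ℝ := fun s => ⨅ t, y t s with hwinf
  have htendy : ∀ s, Tendsto (fun t => y t s) atTop (nhds (winf s)) := by
    intro s
    apply tendsto_atTop_ciInf
    · exact fun t t' htt => hyAnti htt s
    · exact ⟨M, by rintro _ ⟨t, rfl⟩; exact hyM t s⟩
  -- L winf = winf
  have hLwinf : L winf = winf := by
    funext s
    have h1 : Tendsto (fun t => L (y t) s) atTop (nhds (L winf s)) := by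
      have := aux_tendsto_finset_sup' (Finset.univ_nonempty (α := A))
        (fun a t => (Bmat p r β a *ᵥ y t) s - bvec p r β a s)
        (fun a => (Bmat p r β a *ᵥ winf) s - bvec p r β a s)
        (fun a _ => by
          have hsum : Tendsto (fun t => ∑ s', Bmat p r β a s s' * y t s') atTop
              (nhds (∑ s', Bmat p r β a s s' * winf s')) :=
            tendsto_finset_sum _ (fun s' _ => (htendy s').const_mul _)
          have : (fun t => (Bmat p r β a *ᵥ y t) s) = fun t => ∑ s', Bmat p r β a s s' * y t s' :=
            rfl
          rw [show (fun t => (Bmat p r β a *ᵥ y t) s - bvec p r β a s)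
              = fun t => (∑ s', Bmat p r β a s s' * y t s') - bvec p r β a s from rfl]
          exact hsum.sub_const _)
      exact this
    have h2 : Tendsto (fun t => L (y t) s) atTop (nhds (winf s)) := by
      have h3 : (fun t => L (y t) s) = fun t => y (t + 1) s := by
        funext t; rw [hysucc t]
      rw [h3]
      exact (htendy s).comp (tendsto_add_atTop_nat 1)
    exact tendsto_nhds_unique h1 h2
  -- the optimal decision rule
  have hds : ∀ s : S, ∃ a : A, L winf s = (Bmat p r β a *ᵥ winf) s - bvec p r β a s := by
    intro s
    obtain ⟨a, _, ha⟩ := Finset.exists_mem_eq_sup' (Finset.univ_nonempty (α := A))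
      (fun a => (Bmat p r β a *ᵥ winf) s - bvec p r β a s)
    exact ⟨a, ha⟩
  choose dstar hdstar using hds
  set B : Matrix S S ℝ := Bdet p r β dstar with hB
  set b : S → ℝ := bdet p r β dstar with hbdef
  have hBnn' : ∀ s s', 0 ≤ B s s' := fun s s' => hBnn (dstar s) s s'
  have hbnn' : ∀ s, 0 ≤ b s := fun s => hbnn (dstar s) s
  have hfix : winf = B *ᵥ winf - b := by
    funext s
    have h1 : winf s = L winf s := by rw [hLwinf]
    rw [h1, hdstar s]
    rfl
  -- pass to u := -winf
  set u : S → ℝ := -winf with hu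
  have hwinf0 : winf ≤ 0 := by
    intro s
    have := ciInf_le (⟨M, by rintro _ ⟨t, rfl⟩; exact hyM t s⟩ : BddBelow (Set.range fun t => y t s)) 0
    simpa [hy0] using this
  have hu0 : (0 : S → ℝ) ≤ u := fun s => by
    have h1 := hwinf0 s
    simp only [Pi.zero_apply, hu, Pi.neg_apply] at h1 ⊢
    linarith
  have hueq : u = B *ᵥ u + b := by
    have hmv : B *ᵥ u = -(B *ᵥ winf) := by rw [hu, Matrix.mulVec_neg]
    funext s
    have h2 := congrFun hfix s
    have h3 := congrFun hmv s
    simp only [hu, Pi.neg_apply, Pi.add_apply, Pi.sub_apply] at h2 h3 ⊢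
    linarith
  have hBu : B *ᵥ u ≤ u := by
    intro s
    have := congrFun hueq s
    have := hbnn' s
    simp only [Pi.add_apply] at *
    linarith
  have hbu : b ≤ u := by
    intro s
    have h1 := congrFun hueq s
    have h2 : 0 ≤ (B *ᵥ u) s := by
      have := aux_mulVec_mono hBnn' hu0 s
      rwa [Matrix.mulVec_zero] at this
    simp only [Pi.add_apply] at *
    linarith
  have hupow : ∀ n, B ^ n *ᵥ u ≤ u := by
    intro n
    induction n with
    | zero => rw [pow_zero, Matrix.one_mulVec]
    | succ n ih =>
        calc B ^ (n+1) *ᵥ u = B ^ n *ᵥ (B *ᵥ u) := by rw [Matrix.mulVec_mulVec, ← pow_succ]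
          _ ≤ B ^ n *ᵥ u := aux_pow_mulVec_mono hBnn' n hBu
          _ ≤ u := ih
  -- reachability of a leaking state
  set P : Matrix S S ℝ := Pmat p dstar with hP
  have hPnn : ∀ s s', 0 ≤ P s s' := fun s s' => hp_nonneg s (dstar s) (some s')
  have hPsum : ∀ s, p s (dstar s) none + ∑ s', P s s' = 1 := by
    intro s
    rw [← hp_sum s (dstar s)]
    exact (Fintype.sum_option _).symm
  have hPsub : ∀ s, ∑ s', P s s' ≤ 1 := by
    intro s
    have := hPsum s
    have := hp_nonneg s (dstar s) none
    linarith
  set rel : S → S → Prop := fun s s' => 0 < P s s' with hrel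
  have hrelB : ∀ s s', rel s s' ↔ 0 < B s s' := by
    intro s s'
    have hBP : B s s' = P s s' * Real.exp (-β * r s (dstar s) (some s')) := rfl
    constructor
    · intro h
      rw [hBP]
      exact mul_pos h (Real.exp_pos _)
    · intro h
      rw [hBP] at h
      by_contra hnot
      have hP0 : P s s' = 0 := le_antisymm (not_lt.mp hnot) (hPnn s s')
      rw [hP0, zero_mul] at h
      exact lt_irrefl 0 h
  have hreachb : ∀ s, ∃ g, Relation.ReflTransGen rel s g ∧ 0 < b g := by
    intro s1
    by_contra hcon
    push_neg at hcon
    have hb0 : ∀ g, Relation.ReflTransGen rel s1 g → b g = 0 := fun g hg =>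
      le_antisymm (hcon g hg) (hbnn' g)
    set χ : S → ℝ := fun t => if Relation.ReflTransGen rel s1 t then 1 else 0 with hχ
    have hχnn : (0 : S → ℝ) ≤ χ := fun t => by
      simp only [hχ]; split <;> norm_num
    have hχs1 : 0 < χ s1 := by
      simp only [hχ, if_pos Relation.ReflTransGen.refl]; norm_num
    have hinv : χ ≤ P *ᵥ χ := by
      intro s
      by_cases hs : Relation.ReflTransGen rel s1 s
      · have hterm : ∀ s', P s s' * χ s' = P s s' := by
          intro s'
          rcases lt_or_eq_of_le (hPnn s s') with h' | h'
          · have : Relation.ReflTransGen rel s1 s' := hs.tail h'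
            simp [hχ, if_pos this]
          · rw [← h', zero_mul]
        have hnone : p s (dstar s) none = 0 := by
          have hbs : b s = 0 := hb0 s hs
          have : p s (dstar s) none * Real.exp (-β * r s (dstar s) none) = 0 := hbs
          rcases mul_eq_zero.mp this with h | h
          · exact h
          · exact absurd h (Real.exp_pos _).ne'
        have hsum1 : ∑ s', P s s' = 1 := by
          have := hPsum s
          rw [hnone] at this
          linarith
        have : (P *ᵥ χ) s = ∑ s', P s s' := by
          show ∑ s', P s s' * χ s' = ∑ s', P s s'
          exact Finset.sum_congr rfl fun s' _ => hterm s'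
        rw [show χ s = 1 from by simp [hχ, if_pos hs]]
        rw [this, hsum1]
      · have : χ s = 0 := by simp [hχ, if_neg hs]
        rw [this]
        have : 0 ≤ (P *ᵥ χ) s :=
          Finset.sum_nonneg fun s' _ => mul_nonneg (hPnn s s') (hχnn s')
        linarith
    exact aux_no_superinvariant P hPnn hPsub (htransient dstar) χ hχnn s1 hχs1 hinv
  -- positivity of u
  have hpowb : ∀ n, B ^ n *ᵥ b ≤ u := by
    intro n
    induction n with
    | zero => rw [pow_zero, Matrix.one_mulVec]; exact hbu
    | succ n ih =>
        calc B ^ (n+1) *ᵥ b = B *ᵥ (B ^ n *ᵥ b) := by rw [Matrix.mulVec_mulVec, ← pow_succ']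
          _ ≤ B *ᵥ u := aux_mulVec_mono hBnn' ih
          _ ≤ u := hBu
  have hpathpos : ∀ s g, Relation.ReflTransGen rel s g → 0 < b g →
      ∃ j, 0 < (B ^ j *ᵥ b) s := by
    intro s g hsg hg
    induction hsg using Relation.ReflTransGen.head_induction_on with
    | refl => exact ⟨0, by rw [pow_zero, Matrix.one_mulVec]; exact hg⟩
    | @head s' s'' hstep htail ih =>
        obtain ⟨j, hj⟩ := ih
        refine ⟨j + 1, ?_⟩
        rw [show B ^ (j+1) *ᵥ b = B *ᵥ (B ^ j *ᵥ b) from by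
          rw [Matrix.mulVec_mulVec, ← pow_succ']]
        have hnn : ∀ x, 0 ≤ (B ^ j *ᵥ b) x := fun x =>
          aux_pow_mulVec_nonneg hBnn' j (fun t => hbnn' t) x
        have hBpos : 0 < B s' s'' := (hrelB s' s'').mp hstep
        calc (0:ℝ) < B s' s'' * (B ^ j *ᵥ b) s'' := mul_pos hBpos hj
          _ ≤ ∑ x, B s' x * (B ^ j *ᵥ b) x :=
            Finset.single_le_sum (fun x _ => mul_nonneg (hBnn' s' x) (hnn x)) (Finset.mem_univ s'')
  have hupos : ∀ s, 0 < u s := by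
    intro s
    obtain ⟨g, hsg, hg⟩ := hreachb s
    obtain ⟨j, hj⟩ := hpathpos s g hsg hg
    exact lt_of_lt_of_le hj (hpowb j s)
  -- strict decrease along reachability
  have hreach2 : ∀ s, ∃ k, (B ^ (k+1) *ᵥ u) s < u s := by
    intro s
    obtain ⟨g, hsg, hg⟩ := hreachb s
    clear hupos
    induction hsg using Relation.ReflTransGen.head_induction_on with
    | refl =>
        refine ⟨0, ?_⟩
        rw [pow_one]
        have := congrFun hueq g
        simp only [Pi.add_apply] at this
        linarith
    | @head s' s'' hstep htail ih =>
        obtain ⟨k, hk⟩ := ih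
        refine ⟨k + 1, ?_⟩
        rw [show B ^ (k+1+1) *ᵥ u = B *ᵥ (B ^ (k+1) *ᵥ u) from by
          rw [Matrix.mulVec_mulVec, ← pow_succ']]
        have hBpos : 0 < B s' s'' := (hrelB s' s'').mp hstep
        have hlt : ∑ x, B s' x * (B ^ (k+1) *ᵥ u) x < ∑ x, B s' x * u x := by
          apply Finset.sum_lt_sum
          · intro x _
            exact mul_le_mul_of_nonneg_left (hupow (k+1) x) (hBnn' s' x)
          · exact ⟨s'', Finset.mem_univ s'', mul_lt_mul_of_pos_left hk hBpos⟩
        calc (B *ᵥ (B ^ (k+1) *ᵥ u)) s' = ∑ x, B s' x * (B ^ (k+1) *ᵥ u) x := rfl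
          _ < ∑ x, B s' x * u x := hlt
          _ = (B *ᵥ u) s' := rfl
          _ ≤ u s' := hBu s'
  -- powers of B kill every vector
  have htend0 : ∀ (v : S → ℝ) (s : S), Tendsto (fun n => (B ^ n *ᵥ v) s) atTop (nhds 0) :=
    fun v s => aux_pow_mulVec_tendsto_zero hBnn' hupos hBu hreach2 v s
  -- the affine map F and the sandwich
  set F : (S → ℝ) → (S → ℝ) := fun v => B *ᵥ v - b with hF
  have hFmono : ∀ {v v' : S → ℝ}, v ≤ v' → F v ≤ F v' := by
    intro v v' h s
    have := aux_mulVec_mono hBnn' h s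
    simp only [hF, Pi.sub_apply]
    linarith
  have hFwinf : F winf = winf := hfix.symm
  have hFiter : ∀ n (v : S → ℝ), F^[n] v = winf + (B ^ n *ᵥ (v - winf)) := by
    intro n
    induction n with
    | zero => intro v; simp [Matrix.one_mulVec]
    | succ n ih =>
        intro v
        rw [Function.iterate_succ_apply' F n v, ih v]
        funext s
        have h1 : B *ᵥ (winf + B ^ n *ᵥ (v - winf))
            = B *ᵥ winf + B ^ (n+1) *ᵥ (v - winf) := by
          rw [Matrix.mulVec_add, Matrix.mulVec_mulVec, ← pow_succ']
        simp only [hF, Pi.sub_apply, Pi.add_apply, h1]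
        have h2 := congrFun hfix s
        simp only [Pi.sub_apply] at h2
        linarith
  have hsand : ∀ n t, F^[n] (fun _ => M) ≤ w (n + t) := by
    intro n
    induction n with
    | zero =>
        intro t
        rw [Function.iterate_zero, id, zero_add]; exact fun s => hM t s
    | succ n ih =>
        intro t
        rw [Function.iterate_succ_apply' F n _]
        have h1 : F (F^[n] (fun _ => M)) ≤ F (w (n + t)) := hFmono (ih t)
        have h2 : F (w (n + t)) ≤ L (w (n + t)) := fun s => hLle dstar (w (n + t)) s
        have h3 : L (w (n + t)) = w (n + 1 + t) := by
          rw [show n + 1 + t = (n + t) + 1 from by omega, hwsucc (n + t)]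
        calc F (F^[n] (fun _ => M)) ≤ F (w (n + t)) := h1
          _ ≤ L (w (n + t)) := h2
          _ = w (n + 1 + t) := h3
  -- convergence of w to winf
  have htendw : ∀ s, Tendsto (fun t => w t s) atTop (nhds (winf s)) := by
    intro s
    rw [Metric.tendsto_atTop]
    intro ε hε
    -- choose n₀ such that the power term is small
    have h1 := htend0 ((fun _ => M) - winf) s
    rw [Metric.tendsto_atTop] at h1
    obtain ⟨n₀, hn₀⟩ := h1 (ε/2) (by linarith)
    have hpow : |(B ^ n₀ *ᵥ ((fun _ => M) - winf)) s| < ε/2 := by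
      have := hn₀ n₀ le_rfl
      rwa [Real.dist_eq, sub_zero] at this
    -- choose T such that y is close
    have h2 := htendy s
    rw [Metric.tendsto_atTop] at h2
    obtain ⟨T, hT⟩ := h2 (ε/2) (by linarith)
    refine ⟨n₀ + T, ?_⟩
    intro t ht
    rw [Real.dist_eq]
    have hup : w t s ≤ y t s := hwy t s
    have hy' : |y t s - winf s| < ε/2 := by
      have := hT t (by omega)
      rwa [Real.dist_eq] at this
    have hlo : winf s + (B ^ n₀ *ᵥ ((fun _ => M) - winf)) s ≤ w t s := by
      have h3 := hsand n₀ (t - n₀) s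
      rw [hFiter n₀ _] at h3
      have h4 : n₀ + (t - n₀) = t := by omega
      rw [h4] at h3
      simpa using h3
    have habs := abs_lt.mp hpow
    have habs' := abs_lt.mp hy'
    rw [abs_lt]
    constructor <;> linarith
  have htendw' : Tendsto w atTop (nhds winf) := by
    rw [tendsto_pi_nhds]
    exact htendw
  -- uniqueness
  refine ⟨winf, htendw', dstar, hfix, ?_⟩
  intro w' hw'
  set δ : S → ℝ := w' - winf with hδ
  have hδeq : B *ᵥ δ = δ := by
    funext s
    have h1 := congrFun hw' s
    have h2 := congrFun hfix s
    have h3 : (B *ᵥ δ) s = (B *ᵥ w') s - (B *ᵥ winf) s := by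
      rw [hδ, Matrix.mulVec_sub]; rfl
    simp only [hδ, Pi.sub_apply] at *
    linarith
  have hδn : ∀ n, B ^ n *ᵥ δ = δ := by
    intro n
    induction n with
    | zero => rw [pow_zero, Matrix.one_mulVec]
    | succ n ih => rw [pow_succ', ← Matrix.mulVec_mulVec, ih, hδeq]
  have hδ0 : ∀ s, δ s = 0 := by
    intro s
    have h1 : Tendsto (fun n => (B ^ n *ᵥ δ) s) atTop (nhds 0) := htend0 δ s
    have h2 : (fun n => (B ^ n *ᵥ δ) s) = fun _ => δ s := by
      funext n; rw [hδn n]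
    rw [h2] at h1
    exact tendsto_nhds_unique tendsto_const_nhds h1
  funext s
  have := hδ0 s
  simp only [hδ, Pi.sub_apply] at this
  linarith
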